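/- Let A, B ∈ ℝ^{n×m} with Aᵀ A = Bᵀ B, rank A = m < n, and Ā, B̄ as above (orthonormal, Āᵀ A = 0, B̄ᵀ B = 0). Then for every U ∈ O(n−m), the matrix Q = B A⁺ + B̄ U Āᵀ is orthogonal and satisfies Q A = B. -/
import Mathlib

open Matrix

private lemma isUnit_of_rank_eq {k : ℕ} (M : Matrix (Fin k) (Fin k) ℝ) (h : M.rank = k) :
    IsUnit M := by
  rw [← Matrix.mulVec_surjective_iff_isUnit]
  have hr : LinearMap.range M.mulVecLin = ⊤ := by
    apply Submodule.eq_top_of_finrank_eq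
    rw [show Module.finrank ℝ (LinearMap.range M.mulVecLin) = M.rank from rfl, h]
    simp
  intro v
  exact LinearMap.range_eq_top.mp hr v

private lemma symm_idem_trace_zero {k : ℕ} (N : Matrix (Fin k) (Fin k) ℝ)
    (hsym : Nᵀ = N) (hidem : N * N = N) (htr : N.trace = 0) : N = 0 := by
  have key : Matrix.trace (Nᵀ * N) = 0 := by rw [hsym, hidem, htr]
  have hsum : ∑ j, ∑ i, N i j * N i j = 0 := by
    simpa [Matrix.trace, Matrix.mul_apply, Matrix.diag] using key
  ext i j
  have h1 := (Finset.sum_eq_zero_iff_of_nonneg (fun j _ =>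
    Finset.sum_nonneg (fun i _ => mul_self_nonneg (N i j)))).mp hsum j (by simp)
  have h2 := (Finset.sum_eq_zero_iff_of_nonneg (fun i _ =>
    mul_self_nonneg (N i j))).mp h1 i (by simp)
  simpa using mul_self_eq_zero.mp h2

theorem stmt_11 {n m : ℕ} (A B : Matrix (Fin n) (Fin m) ℝ)
    (Abar Bbar : Matrix (Fin n) (Fin (n - m)) ℝ)
    (hAB : Aᵀ * A = Bᵀ * B) (hrank : A.rank = m) (hmn : m < n)
    (hAbar : Abarᵀ * Abar = 1) (hBbar : Bbarᵀ * Bbar = 1)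
    (hBo : Bbarᵀ * B = 0) (hAo : Abarᵀ * A = 0)
    (U : Matrix (Fin (n - m)) (Fin (n - m)) ℝ) (hU : Uᵀ * U = 1) :
    (B * ((Aᵀ * A)⁻¹ * Aᵀ) + Bbar * U * Abarᵀ)ᵀ *
        (B * ((Aᵀ * A)⁻¹ * Aᵀ) + Bbar * U * Abarᵀ) = 1 ∧
      (B * ((Aᵀ * A)⁻¹ * Aᵀ) + Bbar * U * Abarᵀ) * A = B := by
  set G := Aᵀ * A with hG
  have hGunit : IsUnit G := by
    apply isUnit_of_rank_eq
    rw [hG, Matrix.rank_transpose_mul_self, hrank]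
  have hGdet : IsUnit G.det := (Matrix.isUnit_iff_isUnit_det G).mp hGunit
  have hinvG : G⁻¹ * G = 1 := Matrix.nonsing_inv_mul G hGdet
  have hGinv : G * G⁻¹ = 1 := Matrix.mul_nonsing_inv G hGdet
  have hGsym : Gᵀ = G := by rw [hG, Matrix.transpose_mul, Matrix.transpose_transpose]
  have hGinvsym : (G⁻¹)ᵀ = G⁻¹ := by rw [Matrix.transpose_nonsing_inv, hGsym]
  have hAAbar : Aᵀ * Abar = 0 := by
    have := congrArg Matrix.transpose hAo
    simpa [Matrix.transpose_mul] using this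
  have hBBbar : Bᵀ * Bbar = 0 := by
    have := congrArg Matrix.transpose hBo
    simpa [Matrix.transpose_mul] using this
  -- second part
  have hQA : (B * (G⁻¹ * Aᵀ) + Bbar * U * Abarᵀ) * A = B := by
    have h : (B * (G⁻¹ * Aᵀ) + Bbar * U * Abarᵀ) * A
        = B * (G⁻¹ * G) + Bbar * (U * (Abarᵀ * A)) := by
      rw [hG]
      simp only [Matrix.add_mul, Matrix.mul_assoc]
    rw [h, hinvG, hAo, Matrix.mul_one]
    simp
  -- P + Abar Abarᵀ = 1
  have hP1 : A * G⁻¹ * Aᵀ + Abar * Abarᵀ = 1 := by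
    set N : Matrix (Fin n) (Fin n) ℝ := 1 - A * G⁻¹ * Aᵀ - Abar * Abarᵀ with hN
    have hNsym : Nᵀ = N := by
      simp [hN, Matrix.transpose_sub, Matrix.transpose_mul, Matrix.transpose_transpose,
        hGinvsym, Matrix.mul_assoc]
    have hPP : (A * G⁻¹ * Aᵀ) * (A * G⁻¹ * Aᵀ) = A * G⁻¹ * Aᵀ := by
      calc (A * G⁻¹ * Aᵀ) * (A * G⁻¹ * Aᵀ) = A * (G⁻¹ * ((Aᵀ * A) * (G⁻¹ * Aᵀ))) := by
            noncomm_ring [Matrix.mul_assoc]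
        _ = A * G⁻¹ * Aᵀ := by rw [← hG, ← Matrix.mul_assoc G, hGinv, Matrix.one_mul,
            ← Matrix.mul_assoc]
    have hPQ : (A * G⁻¹ * Aᵀ) * (Abar * Abarᵀ) = 0 := by
      calc (A * G⁻¹ * Aᵀ) * (Abar * Abarᵀ) = A * G⁻¹ * ((Aᵀ * Abar) * Abarᵀ) := by
            noncomm_ring [Matrix.mul_assoc]
        _ = 0 := by rw [hAAbar, Matrix.zero_mul, Matrix.mul_zero]
    have hQP : (Abar * Abarᵀ) * (A * G⁻¹ * Aᵀ) = 0 := by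
      calc (Abar * Abarᵀ) * (A * G⁻¹ * Aᵀ) = Abar * ((Abarᵀ * A) * (G⁻¹ * Aᵀ)) := by
            noncomm_ring [Matrix.mul_assoc]
        _ = 0 := by rw [hAo, Matrix.zero_mul, Matrix.mul_zero]
    have hQQ : (Abar * Abarᵀ) * (Abar * Abarᵀ) = Abar * Abarᵀ := by
      calc (Abar * Abarᵀ) * (Abar * Abarᵀ) = Abar * ((Abarᵀ * Abar) * Abarᵀ) := by
            noncomm_ring [Matrix.mul_assoc]
        _ = Abar * Abarᵀ := by rw [hAbar, Matrix.one_mul]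
    have hNidem : N * N = N := by
      simp only [hN, Matrix.sub_mul, Matrix.mul_sub, Matrix.one_mul, Matrix.mul_one,
        hPP, hPQ, hQP, hQQ]
      abel
    have htrP : (A * G⁻¹ * Aᵀ).trace = (m : ℝ) := by
      rw [Matrix.mul_assoc, Matrix.trace_mul_comm, Matrix.mul_assoc, ← hG, hinvG,
        Matrix.trace_one]
      simp
    have htrQ : (Abar * Abarᵀ).trace = ((n - m : ℕ) : ℝ) := by
      rw [Matrix.trace_mul_comm, hAbar, Matrix.trace_one]
      simp
    have htrN : N.trace = 0 := by
      simp only [hN, Matrix.trace_sub, Matrix.trace_one, htrP, htrQ, Fintype.card_fin]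
      rw [Nat.cast_sub hmn.le]
      ring
    have h0 := symm_idem_trace_zero N hNsym hNidem htrN
    rw [hN, sub_sub, sub_eq_zero] at h0
    exact h0.symm
  -- first part
  have hQtQ : (B * (G⁻¹ * Aᵀ) + Bbar * U * Abarᵀ)ᵀ *
      (B * (G⁻¹ * Aᵀ) + Bbar * U * Abarᵀ) = 1 := by
    have hexp : (B * (G⁻¹ * Aᵀ) + Bbar * U * Abarᵀ)ᵀ *
        (B * (G⁻¹ * Aᵀ) + Bbar * U * Abarᵀ)
        = A * (G⁻¹ * ((Bᵀ * B) * (G⁻¹ * Aᵀ))) + A * (G⁻¹ * ((Bᵀ * Bbar) * (U * Abarᵀ)))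
          + Abar * (Uᵀ * ((Bbarᵀ * B) * (G⁻¹ * Aᵀ)))
          + Abar * ((Uᵀ * ((Bbarᵀ * Bbar) * U)) * Abarᵀ) := by
      simp only [Matrix.transpose_add, Matrix.transpose_mul, Matrix.transpose_transpose,
        hGinvsym]
      noncomm_ring [Matrix.mul_assoc]
    rw [hexp, ← hAB]
    simp only [hBBbar, hBo, hBbar, Matrix.zero_mul, Matrix.mul_zero, Matrix.one_mul, hU,
      Matrix.mul_one, add_zero, zero_add]
    rw [← Matrix.mul_assoc G G⁻¹ Aᵀ, hGinv, Matrix.one_mul, ← Matrix.mul_assoc]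
    exact hP1
  exact ⟨hQtQ, hQA⟩
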